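/- arXiv:1801.00581 — 2 statements merged into one kernel-verified Lean document; each statement's English description precedes it below -/
import Mathlib

section
/- Let (G,·,D,⋆) be a probabilistic invariant metric group with ⋆ continuous (and sup-continuous). Then (Π(G), ⊙, 𝔻, ⋆) is a probabilistic invariant complete metric group with identity δ_e: Π(G) is closed under ⊙, every element of Π(G) has a ⊙-inverse in Π(G), and 𝔻(f⊙h, g⊙h) = 𝔻(h⊙f, h⊙g) = 𝔻(f,g). -/
open Filter Topology Set

/-- A (real-domain representation of a) distribution function in Δ⁺ :
nondecreasing, with values in [0,1], left-continuous, vanishing on (-∞,0]. -/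
def MemDP (f : ℝ → ℝ) : Prop :=
  Monotone f ∧ (∀ t, 0 ≤ f t) ∧ (∀ t, f t ≤ 1) ∧
  (∀ t : ℝ, Tendsto f (nhdsWithin t (Set.Iio t)) (nhds (f t))) ∧
  (∀ t ≤ (0:ℝ), f t = 0)

/-- The distribution H₀. -/
noncomputable def H0 : ℝ → ℝ := fun t => if 0 < t then 1 else 0

/-- The distribution H_∞ (zero at every finite point). -/
def Hinf : ℝ → ℝ := fun _ => 0

/-- Pointwise order on distribution functions. -/
def dpLE (f g : ℝ → ℝ) : Prop := ∀ t, f t ≤ g t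

/-- Triangle function on Δ⁺. -/
structure IsTriangle (star : (ℝ → ℝ) → (ℝ → ℝ) → (ℝ → ℝ)) : Prop where
  mem : ∀ f g, MemDP f → MemDP g → MemDP (star f g)
  comm : ∀ f g, MemDP f → MemDP g → star f g = star g f
  assoc : ∀ f g h, MemDP f → MemDP g → MemDP h →
    star f (star g h) = star (star f g) h
  ident : ∀ f, MemDP f → star f H0 = f
  mono : ∀ f g h, MemDP f → MemDP g → MemDP h → dpLE f g → dpLE (star f h) (star g h)

/-- Sup-continuity of a triangle function (suprema in Δ⁺ are pointwise). -/
def SupCont (star : (ℝ → ℝ) → (ℝ → ℝ) → (ℝ → ℝ)) : Prop :=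
  ∀ (I : Type) (_ : Nonempty I) (F : I → ℝ → ℝ) (L : ℝ → ℝ),
    (∀ i, MemDP (F i)) → MemDP L →
    ∀ t, (⨆ i, star (F i) L t) = star (fun s => ⨆ i, F i s) L t

/-- Weak convergence in Δ⁺: pointwise convergence at each continuity point of the limit. -/
def WConv (Fn : ℕ → ℝ → ℝ) (F : ℝ → ℝ) : Prop :=
  ∀ t, ContinuousAt F t → Tendsto (fun n => Fn n t) atTop (nhds (F t))

/-- Continuity of a triangle function w.r.t. weak convergence. -/
def StarCont (star : (ℝ → ℝ) → (ℝ → ℝ) → (ℝ → ℝ)) : Prop :=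
  ∀ (Fn Ln : ℕ → ℝ → ℝ) (F L : ℝ → ℝ),
    (∀ n, MemDP (Fn n)) → (∀ n, MemDP (Ln n)) → MemDP F → MemDP L →
    WConv Fn F → WConv Ln L → WConv (fun n => star (Fn n) (Ln n)) (star F L)

/-- Probabilistic metric space (G, D, ⋆). -/
structure IsPMS {G : Type} (D : G → G → ℝ → ℝ)
    (star : (ℝ → ℝ) → (ℝ → ℝ) → (ℝ → ℝ)) : Prop where
  tri : IsTriangle star
  mem : ∀ p q, MemDP (D p q)
  eq_iff : ∀ p q, D p q = H0 ↔ p = q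
  symm : ∀ p q, D p q = D q p
  triangle_ineq : ∀ p q r, dpLE (star (D p q) (D q r)) (D p r)

/-- Probabilistic invariant metric group. -/
structure IsPIMG {G : Type} [Group G] (D : G → G → ℝ → ℝ)
    (star : (ℝ → ℝ) → (ℝ → ℝ) → (ℝ → ℝ)) extends IsPMS D star : Prop where
  invL : ∀ p q r : G, D (r * p) (r * q) = D p q
  invR : ∀ p q r : G, D (p * r) (q * r) = D p q

/-- Probabilistic 1-Lipschitz map. -/
def Lip1 {G : Type} (D : G → G → ℝ → ℝ) (star : (ℝ → ℝ) → (ℝ → ℝ) → (ℝ → ℝ))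
    (f : G → ℝ → ℝ) : Prop :=
  (∀ x, MemDP (f x)) ∧ ∀ x y, dpLE (star (D x y) (f y)) (f x)

/-- δ_a(y) = D(y,a). -/
def dlt {G : Type} (D : G → G → ℝ → ℝ) (a : G) : G → ℝ → ℝ := fun y => D y a

/-- Sup-convolution (f ⊙ g)(x) = sup_{yz = x} f(y) ⋆ g(z), pointwise. -/
noncomputable def sconv {G : Type} [Group G] (star : (ℝ → ℝ) → (ℝ → ℝ) → (ℝ → ℝ))
    (f g : G → ℝ → ℝ) : G → ℝ → ℝ :=
  fun x t => ⨆ y : G, star (f (x * y⁻¹)) (g y) t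

/-- Cauchy sequence for a probabilistic metric: D(a_n, a_p) → H₀ weakly. -/
def PCauchy {G : Type} (D : G → G → ℝ → ℝ) (a : ℕ → G) : Prop :=
  ∀ t > (0:ℝ), ∀ ε > (0:ℝ), ∃ N, ∀ n ≥ N, ∀ p ≥ N, 1 - ε ≤ D (a n) (a p) t

/-- Π(G): probabilistic 1-Lipschitz maps that are pointwise weak limits of δ_{a_n}
for some Cauchy sequence (a_n). -/
def InPi {G : Type} (D : G → G → ℝ → ℝ) (star : (ℝ → ℝ) → (ℝ → ℝ) → (ℝ → ℝ))
    (f : G → ℝ → ℝ) : Prop :=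
  Lip1 D star f ∧ ∃ a : ℕ → G, PCauchy D a ∧ ∀ x, WConv (fun n => D (a n) x) (f x)

/-- 𝔻(f,g) = sup_{x∈G} f(x) ⋆ g(x), pointwise. -/
noncomputable def DD {G : Type} (star : (ℝ → ℝ) → (ℝ → ℝ) → (ℝ → ℝ))
    (f g : G → ℝ → ℝ) : ℝ → ℝ :=
  fun t => ⨆ x : G, star (f x) (g x) t

/-- t-norm on [0,1]. -/
structure IsTnorm (T : ℝ → ℝ → ℝ) : Prop where
  mem : ∀ x ∈ Set.Icc (0:ℝ) 1, ∀ y ∈ Set.Icc (0:ℝ) 1, T x y ∈ Set.Icc (0:ℝ) 1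
  comm : ∀ x y, T x y = T y x
  assoc : ∀ x y z, T x (T y z) = T (T x y) z
  mono : ∀ x y z, y ≤ z → T x y ≤ T x z
  one : ∀ x ∈ Set.Icc (0:ℝ) 1, T x 1 = x

/-- Left-continuity of a t-norm (in each variable; by commutativity one suffices). -/
def LeftCtsTnorm (T : ℝ → ℝ → ℝ) : Prop :=
  ∀ y x : ℝ, Tendsto (fun s => T s y) (nhdsWithin x (Set.Iio x)) (nhds (T x y))

/-- The triangle function ⋆_T : (F ⋆_T L)(t) = sup_{s+u=t} T(F(s), L(u)). -/
noncomputable def starT (T : ℝ → ℝ → ℝ) (f g : ℝ → ℝ) : ℝ → ℝ :=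
  fun t => ⨆ s : ℝ, T (f s) (g (t - s))


section Toolkit

variable {φ ψ : ℝ → ℝ}

lemma MemDP.mono' (h : MemDP φ) : Monotone φ := h.1
lemma MemDP.nonneg (h : MemDP φ) : ∀ t, 0 ≤ φ t := h.2.1
lemma MemDP.le_one (h : MemDP φ) : ∀ t, φ t ≤ 1 := h.2.2.1
lemma MemDP.lc (h : MemDP φ) :
    ∀ t : ℝ, Tendsto φ (nhdsWithin t (Set.Iio t)) (nhds (φ t)) := h.2.2.2.1
lemma MemDP.zero (h : MemDP φ) : ∀ t ≤ (0:ℝ), φ t = 0 := h.2.2.2.2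

lemma left_lim_eq (hm : Monotone φ)
    (hlc : ∀ t : ℝ, Tendsto φ (nhdsWithin t (Set.Iio t)) (nhds (φ t))) (t : ℝ) :
    sSup (φ '' Set.Iio t) = φ t :=
  tendsto_nhds_unique (hm.tendsto_nhdsLT t) (hlc t)

lemma bdd1 {ι : Sort*} {u : ι → ℝ} (h : ∀ i, u i ≤ 1) : BddAbove (Set.range u) :=
  ⟨1, by rintro x ⟨i, rfl⟩; exact h i⟩

lemma bddc {ι : Sort*} {u : ι → ℝ} {c : ℝ} (h : ∀ i, u i ≤ c) : BddAbove (Set.range u) :=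
  ⟨c, by rintro x ⟨i, rfl⟩; exact h i⟩

lemma bddb {ι : Sort*} {u : ι → ℝ} (h : ∀ i, 0 ≤ u i) : BddBelow (Set.range u) :=
  ⟨0, by rintro x ⟨i, rfl⟩; exact h i⟩

lemma exists_notin_countable {a b : ℝ} (h : a < b) {s : Set ℝ} (hs : s.Countable) :
    ∃ x ∈ Set.Ioo a b, x ∉ s := by
  have h1 : (MeasureTheory.volume (Set.Ioo a b)) ≠ 0 := by
    simp [Real.volume_Ioo, h]
  by_contra hh
  push_neg at hh
  exact h1 (MeasureTheory.measure_mono_null (fun x hx => hh x hx) (hs.measure_zero _))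

lemma exists_contAt {a b : ℝ} (h : a < b) (hm : Monotone φ) :
    ∃ x ∈ Set.Ioo a b, ContinuousAt φ x := by
  obtain ⟨x, hx, hx2⟩ := exists_notin_countable h hm.countable_not_continuousAt
  exact ⟨x, hx, not_not.mp hx2⟩

lemma le_on_dense (hφ : MemDP φ) (hψm : Monotone ψ) {S : Set ℝ} (hS : S.Countable)
    (h : ∀ s, s ∉ S → φ s ≤ ψ s) : dpLE φ ψ := by
  intro t
  rw [← left_lim_eq hφ.mono' hφ.lc]
  apply csSup_le ⟨φ (t - 1), Set.mem_image_of_mem _ (by simp only [Set.mem_Iio]; linarith)⟩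
  rintro y ⟨s, hs, rfl⟩
  obtain ⟨v, hv, hv2⟩ := exists_notin_countable hs hS
  exact le_trans (hφ.mono' hv.1.le) (le_trans (h v hv2) (hψm hv.2.le))

lemma le_of_contAt (hφ : MemDP φ) (hψm : Monotone ψ)
    (h : ∀ s, ContinuousAt φ s → φ s ≤ ψ s) : dpLE φ ψ :=
  le_on_dense hφ hψm hφ.mono'.countable_not_continuousAt
    (fun s hs => h s (not_not.mp hs))

lemma memDP_unique (hφ : MemDP φ) (hψ : MemDP ψ)
    (h : ∀ s, ContinuousAt φ s → ContinuousAt ψ s → φ s = ψ s) : φ = ψ := by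
  have hS := hφ.mono'.countable_not_continuousAt.union hψ.mono'.countable_not_continuousAt
  have key : ∀ s, s ∉ ({x | ¬ContinuousAt φ x} ∪ {x | ¬ContinuousAt ψ x} : Set ℝ) →
      φ s = ψ s := by
    intro s hs
    rw [Set.mem_union] at hs
    push_neg at hs
    exact h s (not_not.mp hs.1) (not_not.mp hs.2)
  exact funext fun t => le_antisymm
    (le_on_dense hφ hψ.mono' hS (fun s hs => (key s hs).le) t)
    (le_on_dense hψ hφ.mono' hS (fun s hs => (key s hs).ge) t)

lemma wconv_unique {Fn : ℕ → ℝ → ℝ} (hφ : MemDP φ) (hψ : MemDP ψ)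
    (h1 : WConv Fn φ) (h2 : WConv Fn ψ) : φ = ψ :=
  memDP_unique hφ hψ (fun s hs1 hs2 => tendsto_nhds_unique (h1 s hs1) (h2 s hs2))

lemma wconv_const (φ : ℝ → ℝ) : WConv (fun _ => φ) φ := fun _ _ => tendsto_const_nhds

/-- left continuity from the sSup-representation -/
lemma memDP_of (hm : Monotone φ) (h0 : ∀ t, 0 ≤ φ t) (h1 : ∀ t, φ t ≤ 1)
    (hv : ∀ t ≤ (0:ℝ), φ t = 0)
    (hsup : ∀ t, ∀ ε > (0:ℝ), ∃ s < t, φ t - ε ≤ φ s) : MemDP φ := by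
  refine ⟨hm, h0, h1, fun t => ?_, hv⟩
  have : sSup (φ '' Set.Iio t) = φ t := by
    apply le_antisymm
    · apply csSup_le ⟨φ (t - 1), Set.mem_image_of_mem _ (by simp only [Set.mem_Iio]; linarith)⟩
      rintro y ⟨s, hs, rfl⟩; exact hm hs.le
    · apply le_of_forall_pos_le_add
      intro ε hε
      obtain ⟨s, hs, hs2⟩ := hsup t ε hε
      calc φ t ≤ φ s + ε := by linarith
        _ ≤ _ + ε := by
            have : φ s ∈ φ '' Set.Iio t := Set.mem_image_of_mem _ hs
            exact add_le_add_left (le_csSup ⟨φ t, by rintro y ⟨u, hu, rfl⟩; exact hm hu.le⟩ this) ε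
  exact this ▸ hm.tendsto_nhdsLT t

lemma memDP_exists_lt (hφ : MemDP φ) (t : ℝ) {ε : ℝ} (hε : 0 < ε) :
    ∃ s < t, φ t - ε ≤ φ s := by
  have h := hφ.lc t
  have h2 : ∀ᶠ s in nhdsWithin t (Set.Iio t), φ t - ε < φ s :=
    h.eventually (eventually_gt_nhds (by linarith))
  obtain ⟨s, hs1, hs2⟩ := (h2.and eventually_mem_nhdsWithin).exists
  exact ⟨s, hs2, hs1.le⟩

lemma memDP_iSup {ι : Type} [Nonempty ι] (F : ι → ℝ → ℝ) (h : ∀ i, MemDP (F i)) :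
    MemDP (fun t => ⨆ i, F i t) := by
  have hb : ∀ t, BddAbove (Set.range fun i => F i t) := fun t => bdd1 (fun i => (h i).le_one t)
  apply memDP_of
  · intro s t hst
    exact ciSup_le fun i => le_trans ((h i).mono' hst) (le_ciSup (hb t) i)
  · intro t
    exact le_trans ((h (Classical.arbitrary ι)).nonneg t) (le_ciSup (hb t) _)
  · intro t; exact ciSup_le fun i => (h i).le_one t
  · intro t ht
    have : (fun i => F i t) = fun _ => 0 := funext fun i => (h i).zero t ht
    rw [this, ciSup_const]
  · intro t ε hε
    have h1 : (⨆ i, F i t) - ε/2 < ⨆ i, F i t := by linarith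
    obtain ⟨i, hi⟩ := exists_lt_of_lt_ciSup h1
    obtain ⟨s, hs, hs2⟩ := memDP_exists_lt (h i) t (half_pos hε)
    refine ⟨s, hs, ?_⟩
    have : F i s ≤ ⨆ j, F j s := le_ciSup (hb s) i
    linarith

lemma memDP_H0 : MemDP H0 := by
  have hm : Monotone H0 := by
    intro s t hst
    unfold H0
    by_cases h : 0 < s
    · rw [if_pos h, if_pos (lt_of_lt_of_le h hst)]
    · rw [if_neg h]; positivity
  apply memDP_of hm
  · intro t; unfold H0; positivity
  · intro t; unfold H0; split <;> norm_num
  · intro t ht; exact if_neg (not_lt.mpr ht)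
  · intro t ε hε
    by_cases h : 0 < t
    · exact ⟨t/2, by linarith, by unfold H0; rw [if_pos h, if_pos (show (0:ℝ) < t/2 by linarith)]; linarith⟩
    · exact ⟨t - 1, by linarith, by unfold H0; rw [if_neg h, if_neg (by intro hh; linarith)]; linarith⟩

lemma dpLE_H0 (hφ : MemDP φ) : dpLE φ H0 := by
  intro t
  unfold H0
  by_cases h : 0 < t
  · rw [if_pos h]; exact hφ.le_one t
  · rw [if_neg h, hφ.zero t (not_lt.mp h)]

end Toolkit

section Star

variable {star : (ℝ → ℝ) → (ℝ → ℝ) → (ℝ → ℝ)}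
variable {F L A B C E : ℝ → ℝ}

lemma star_H0_right (htri : IsTriangle star) (hF : MemDP F) : star F H0 = F := htri.ident F hF

lemma star_H0_left (htri : IsTriangle star) (hF : MemDP F) : star H0 F = F := by
  rw [htri.comm H0 F memDP_H0 hF]; exact htri.ident F hF

lemma star_le_right (htri : IsTriangle star) (hF : MemDP F) (hL : MemDP L) : dpLE (star F L) L := by
  have h1 : dpLE (star F L) (star H0 L) := htri.mono F H0 L hF memDP_H0 hL (dpLE_H0 hF)
  rwa [star_H0_left htri hL] at h1

lemma star_le_left (htri : IsTriangle star) (hF : MemDP F) (hL : MemDP L) : dpLE (star F L) F := by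
  rw [htri.comm F L hF hL]; exact star_le_right htri hL hF

lemma star_mono_right (htri : IsTriangle star) (hF : MemDP F) (hL : MemDP L) (hL' : MemDP A) (h : dpLE L A) :
    dpLE (star F L) (star F A) := by
  rw [htri.comm F L hF hL, htri.comm F A hF hL']
  exact htri.mono L A F hL hL' hF h

lemma star_mono2 (htri : IsTriangle star) (hF : MemDP F) (hL : MemDP L) (hA : MemDP A) (hB : MemDP B)
    (h1 : dpLE F A) (h2 : dpLE L B) : dpLE (star F L) (star A B) := fun t =>
  le_trans (htri.mono F A L hF hA hL h1 t) (star_mono_right htri hA hL hB h2 t)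

lemma star_rearrange (htri : IsTriangle star) (hA : MemDP A) (hB : MemDP B) (hC : MemDP C) (hE : MemDP E) :
    star (star A B) (star C E) = star (star A C) (star B E) := by
  have mAB := htri.mem A B hA hB
  have mCE := htri.mem C E hC hE
  have mBC := htri.mem B C hB hC
  have mCB := htri.mem C B hC hB
  have mBE := htri.mem B E hB hE
  have mCBE := htri.mem _ _ mCB hE
  rw [← htri.assoc A B (star C E) hA hB mCE,
      htri.assoc B C E hB hC hE,
      show star B C = star C B from htri.comm B C hB hC,
      ← htri.assoc C B E hC hB hE,
      htri.assoc A C (star B E) hA hC mBE]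

/-- step function c·H_s -/
noncomputable def stepf (c s : ℝ) : ℝ → ℝ := fun u => if s < u then c else 0

lemma stepf_memDP {c s : ℝ} (hc0 : 0 ≤ c) (hc1 : c ≤ 1) (hs : 0 ≤ s) :
    MemDP (stepf c s) := by
  have hm : Monotone (stepf c s) := by
    intro u v huv
    unfold stepf
    by_cases h : s < u
    · rw [if_pos h, if_pos (lt_of_lt_of_le h huv)]
    · rw [if_neg h]; positivity
  apply memDP_of hm
  · intro t; unfold stepf; positivity
  · intro t; unfold stepf; split
    · exact hc1
    · norm_num
  · intro t ht; exact if_neg (by intro hh; linarith)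
  · intro t ε hε
    by_cases h : s < t
    · refine ⟨(s + t)/2, by linarith, ?_⟩
      unfold stepf
      rw [if_pos h, if_pos (show s < (s+t)/2 by linarith)]
      linarith
    · refine ⟨t - 1, by linarith, ?_⟩
      unfold stepf
      rw [if_neg h, if_neg (by intro hh; linarith)]
      linarith

lemma stepf_le (hL : MemDP L) (s : ℝ) : dpLE (stepf (L s) s) L := by
  intro u
  unfold stepf
  by_cases h : s < u
  · rw [if_pos h]; exact hL.mono' h.le
  · rw [if_neg h]; exact hL.nonneg u

lemma stepf_contAt {c s t : ℝ} (h : s < t) : ContinuousAt (stepf c s) t := by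
  apply continuousAt_const.congr
  filter_upwards [isOpen_Ioi.mem_nhds (show t ∈ Set.Ioi s from h)] with u hu
  exact (if_pos hu).symm

lemma one_div_succ_le {r : ℝ} (hr : 0 < r) : ∃ N : ℕ, ∀ n ≥ N, 1 / (n + 1 : ℝ) ≤ r := by
  obtain ⟨N, hN⟩ := exists_nat_gt (1 / r)
  refine ⟨N, fun n hn => ?_⟩
  have h1 : (1:ℝ)/r < n + 1 := lt_of_lt_of_le hN (by exact_mod_cast Nat.le_succ_of_le hn)
  rw [div_le_iff₀ (by positivity)]
  rw [div_lt_iff₀ hr] at h1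
  nlinarith

/-- KEY quantitative lemma: if F is close to H0 then F ⋆ L is close to L from below. -/
lemma quant (htri : IsTriangle star) (hc : StarCont star) {s t ε : ℝ} (hs : 0 < s) (hst : s < t) (hε : 0 < ε) :
    ∃ δ > (0:ℝ), ∃ η > (0:ℝ), ∀ F L, MemDP F → MemDP L → 1 - δ ≤ F η →
      L s - ε ≤ star F L t := by
  by_contra hcon
  push_neg at hcon
  have key : ∀ n : ℕ, ∃ F L, MemDP F ∧ MemDP L ∧ 1 - 1/(n+1 : ℝ) ≤ F (1/(n+1 : ℝ)) ∧
      star F L t < L s - ε := by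
    intro n
    obtain ⟨F, L, h1, h2, h3, h4⟩ := hcon (1/(n+1:ℝ)) (by positivity) (1/(n+1:ℝ)) (by positivity)
    exact ⟨F, L, h1, h2, h3, h4⟩
  choose F L hF hL hFc hbad using key
  set c : ℕ → ℝ := fun n => L n s with hcdef
  have hc01 : ∀ n, c n ∈ Set.Icc (0:ℝ) 1 := fun n => ⟨(hL n).nonneg s, (hL n).le_one s⟩
  obtain ⟨cl, hclm, ψ, hψ, hψc⟩ := isCompact_Icc.tendsto_subseq hc01
  have hψge : ∀ k, k ≤ ψ k := fun k => hψ.le_apply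
  -- weak convergence of F ∘ ψ to H0
  have hFH0 : WConv (fun k => F (ψ k)) H0 := by
    intro u hu
    rcases le_or_gt u 0 with h | h
    · have : ∀ k, F (ψ k) u = 0 := fun k => (hF (ψ k)).zero u h
      simp only [this, H0, if_neg (not_lt.mpr h)]
      exact tendsto_const_nhds
    · have hH : H0 u = 1 := if_pos h
      rw [hH]
      obtain ⟨N, hN⟩ := one_div_succ_le h
      apply tendsto_of_tendsto_of_tendsto_of_le_of_le' (g := fun k => 1 - 1/(ψ k + 1 : ℝ))
        (h := fun _ => (1:ℝ))
      · have h2 : Tendsto (fun k => 1/(ψ k + 1 : ℝ)) atTop (nhds 0) := by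
          have := (tendsto_one_div_add_atTop_nhds_zero_nat (𝕜 := ℝ)).comp hψ.tendsto_atTop
          exact this
        have h3 := tendsto_const_nhds (x := (1:ℝ)) (f := atTop (α := ℕ)) |>.sub h2
        simpa using h3
      · exact tendsto_const_nhds
      · filter_upwards [eventually_ge_atTop N] with k hk
        calc 1 - 1/(ψ k + 1 : ℝ) ≤ F (ψ k) (1/(ψ k + 1 : ℝ)) := hFc (ψ k)
          _ ≤ F (ψ k) u := (hF (ψ k)).mono' (hN (ψ k) (le_trans hk (hψge k)))
      · filter_upwards with k using (hF (ψ k)).le_one u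
  -- weak convergence of step functions
  have hGstep : WConv (fun k => stepf (c (ψ k)) s) (stepf cl s) := by
    intro u _
    unfold stepf
    by_cases h : s < u
    · simp only [if_pos h]; exact hψc
    · simp only [if_neg h]; exact tendsto_const_nhds
  have hstepDP : ∀ n, MemDP (stepf (c n) s) :=
    fun n => stepf_memDP (hc01 n).1 (hc01 n).2 hs.le
  have hstepClDP : MemDP (stepf cl s) := stepf_memDP hclm.1 hclm.2 hs.le
  have hconv := hc (fun k => F (ψ k)) (fun k => stepf (c (ψ k)) s) H0 (stepf cl s)
    (fun k => hF (ψ k)) (fun k => hstepDP (ψ k)) memDP_H0 hstepClDP hFH0 hGstep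
  rw [star_H0_left htri hstepClDP] at hconv
  have hlim : Tendsto (fun k => star (F (ψ k)) (stepf (c (ψ k)) s) t) atTop
      (nhds (stepf cl s t)) := hconv t (stepf_contAt hst)
  have hstept : stepf cl s t = cl := if_pos hst
  -- upper bound of the sequence
  have hub : ∀ k, star (F (ψ k)) (stepf (c (ψ k)) s) t ≤ c (ψ k) - ε := by
    intro k
    calc star (F (ψ k)) (stepf (c (ψ k)) s) t
        ≤ star (F (ψ k)) (L (ψ k)) t :=
          star_mono_right htri (hF (ψ k)) (hstepDP (ψ k)) (hL (ψ k)) (stepf_le (hL (ψ k)) s) t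
      _ ≤ c (ψ k) - ε := (hbad (ψ k)).le
  have : cl ≤ cl - ε := by
    rw [hstept] at hlim
    exact le_of_tendsto_of_tendsto' hlim (hψc.sub tendsto_const_nhds) hub
  linarith

end Star

section FlimSec

/-- tail liminf -/
noncomputable def linf (u : ℕ → ℝ) : ℝ := ⨆ N : ℕ, ⨅ k : ℕ, u (N + k)

variable {u : ℕ → ℝ}

lemma linf_bddN (h0 : ∀ n, 0 ≤ u n) (h1 : ∀ n, u n ≤ 1) :
    BddAbove (Set.range fun N => ⨅ k : ℕ, u (N + k)) :=
  bdd1 fun N => le_trans (ciInf_le (bddb fun k => h0 (N + k)) 0) (h1 (N + 0))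

lemma linf_nonneg (h0 : ∀ n, 0 ≤ u n) (h1 : ∀ n, u n ≤ 1) : 0 ≤ linf u :=
  le_trans (le_ciInf fun k => h0 (0 + k)) (le_ciSup (linf_bddN h0 h1) 0)

lemma linf_le_one (h0 : ∀ n, 0 ≤ u n) (h1 : ∀ n, u n ≤ 1) : linf u ≤ 1 :=
  ciSup_le fun N => le_trans (ciInf_le (bddb fun k => h0 (N + k)) 0) (h1 (N + 0))

lemma le_linf (h0 : ∀ n, 0 ≤ u n) (h1 : ∀ n, u n ≤ 1) {c : ℝ} {N : ℕ}
    (h : ∀ n ≥ N, c ≤ u n) : c ≤ linf u :=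
  le_trans (le_ciInf fun k => h (N + k) (Nat.le_add_right N k))
    (le_ciSup (linf_bddN h0 h1) N)

lemma tail_le (h0 : ∀ n, 0 ≤ u n) {N n : ℕ} (hn : N ≤ n) : (⨅ k : ℕ, u (N + k)) ≤ u n := by
  have := ciInf_le (bddb fun k => h0 (N + k)) (n - N)
  rwa [Nat.add_sub_cancel' hn] at this

lemma exists_tail_gt {c : ℝ} (h : c < linf u) : ∃ N, c < ⨅ k : ℕ, u (N + k) :=
  exists_lt_of_lt_ciSup h

variable {G : Type} [Group G] {D : G → G → ℝ → ℝ} {star : (ℝ → ℝ) → (ℝ → ℝ) → (ℝ → ℝ)}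

/-- canonical limit function of δ_{a n} -/
noncomputable def flim (D : G → G → ℝ → ℝ) (a : ℕ → G) (x : G) : ℝ → ℝ :=
  fun t => ⨆ u : ℝ, if 0 < u ∧ u < t then linf (fun n => D (a n) x u) else 0

lemma term_nonneg (hD : IsPIMG D star) (a : ℕ → G) (x : G) (u t : ℝ) :
    0 ≤ (if 0 < u ∧ u < t then linf (fun n => D (a n) x u) else 0) := by
  split
  · exact linf_nonneg (fun n => (hD.mem _ _).nonneg u) (fun n => (hD.mem _ _).le_one u)
  · exact le_rfl

lemma term_le_one (hD : IsPIMG D star) (a : ℕ → G) (x : G) (u t : ℝ) :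
    (if 0 < u ∧ u < t then linf (fun n => D (a n) x u) else 0) ≤ 1 := by
  split
  · exact linf_le_one (fun n => (hD.mem _ _).nonneg u) (fun n => (hD.mem _ _).le_one u)
  · norm_num

lemma flim_bdd (hD : IsPIMG D star) (a : ℕ → G) (x : G) (t : ℝ) : BddAbove (Set.range fun u : ℝ =>
    if 0 < u ∧ u < t then linf (fun n => D (a n) x u) else 0) :=
  bdd1 (term_le_one hD a x · t)

lemma flim_ge (hD : IsPIMG D star) (a : ℕ → G) (x : G) {u t : ℝ} (h0 : 0 < u) (hut : u < t) :
    linf (fun n => D (a n) x u) ≤ flim D a x t := by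
  have := le_ciSup (flim_bdd hD a x t) u
  rwa [if_pos ⟨h0, hut⟩] at this

lemma flim_nonneg (hD : IsPIMG D star) (a : ℕ → G) (x : G) (t : ℝ) : 0 ≤ flim D a x t := by
  have := le_ciSup (flim_bdd hD a x t) 0
  simp only [lt_irrefl, false_and, if_false] at this
  exact this

lemma flim_memDP (hD : IsPIMG D star) (a : ℕ → G) (x : G) : MemDP (flim D a x) := by
  have hmono : Monotone (flim D a x) := by
    intro s t hst
    apply ciSup_le
    intro u
    refine le_trans ?_ (le_ciSup (flim_bdd hD a x t) u)
    by_cases h : 0 < u ∧ u < s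
    · rw [if_pos h, if_pos ⟨h.1, lt_of_lt_of_le h.2 hst⟩]
    · rw [if_neg h]; exact term_nonneg hD a x u t
  apply memDP_of hmono (flim_nonneg hD a x)
    (fun t => ciSup_le (term_le_one hD a x · t))
  · intro t ht
    apply le_antisymm ?_ (flim_nonneg hD a x t)
    apply ciSup_le
    intro u
    rw [if_neg (by rintro ⟨h1, h2⟩; linarith)]
  · intro t ε hε
    by_cases hpos : flim D a x t - ε < 0
    · exact ⟨t - 1, by linarith, le_trans hpos.le (flim_nonneg hD a x (t-1))⟩
    push_neg at hpos
    have h1 : flim D a x t - ε < flim D a x t := by linarith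
    obtain ⟨u, hu⟩ := exists_lt_of_lt_ciSup h1
    by_cases h : 0 < u ∧ u < t
    · rw [if_pos h] at hu
      refine ⟨(u + t)/2, by linarith [h.2], ?_⟩
      exact le_trans hu.le (flim_ge hD a x h.1 (by linarith [h.2]))
    · rw [if_neg h] at hu; linarith

lemma lemmaC2 (hD : IsPIMG D star) (hc : StarCont star) {a : ℕ → G} (hca : PCauchy D a)
    (x : G) {s t : ℝ} (hst : s < t) {ε : ℝ} (hε : 0 < ε) :
    ∃ N, ∀ n ≥ N, D (a n) x s ≤ flim D a x t + ε := by
  rcases le_or_gt s 0 with hs | hs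
  · exact ⟨0, fun n _ => by
      rw [(hD.mem _ _).zero s hs]
      have := flim_nonneg hD a x t; linarith⟩
  · set v := (s + t)/2 with hv
    obtain ⟨δ, hδ, η, hη, hq⟩ := quant hD.tri hc hs (show s < v by rw [hv]; linarith) hε
    obtain ⟨N, hN⟩ := hca η hη δ hδ
    refine ⟨N, fun n hn => ?_⟩
    have key : ∀ p ≥ N, D (a n) x s - ε ≤ D (a p) x v := by
      intro p hp
      have h1 : dpLE (star (D (a p) (a n)) (D (a n) x)) (D (a p) x) :=
        hD.triangle_ineq (a p) (a n) x
      have h2 : 1 - δ ≤ D (a p) (a n) η := hN p hp n hn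
      exact le_trans (hq (D (a p) (a n)) (D (a n) x) (hD.mem _ _) (hD.mem _ _) h2) (h1 v)
    have h3 : D (a n) x s - ε ≤ linf (fun p => D (a p) x v) :=
      le_linf (fun p => (hD.mem _ _).nonneg v) (fun p => (hD.mem _ _).le_one v) key
    have h4 := flim_ge hD a x (show (0:ℝ) < v by rw [hv]; linarith) (show v < t by rw [hv]; linarith)
    linarith

lemma wconv_flim (hD : IsPIMG D star) (hc : StarCont star) {a : ℕ → G} (hca : PCauchy D a)
    (x : G) : WConv (fun n => D (a n) x) (flim D a x) := by
  intro t hct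
  rcases le_or_gt t 0 with ht | ht
  · have h1 : ∀ n, D (a n) x t = 0 := fun n => (hD.mem _ _).zero t ht
    have h2 : flim D a x t = 0 := (flim_memDP hD a x).zero t ht
    simp only [h1, h2]
    exact tendsto_const_nhds
  · rw [Metric.tendsto_atTop]
    intro ε' hε'
    set ε := ε'/3 with hεdef
    have hε : 0 < ε := by positivity
    -- upper bound
    obtain ⟨θ, hθ, hθ2⟩ := Metric.continuousAt_iff.mp hct ε hε
    have ht' : flim D a x (t + θ/2) ≤ flim D a x t + ε := by
      have := hθ2 (show dist (t + θ/2) t < θ by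
        rw [Real.dist_eq]; rw [abs_of_nonneg (by linarith)]; linarith)
      rw [Real.dist_eq] at this
      have := abs_lt.mp this
      linarith [this.1, this.2]
    obtain ⟨N1, hN1⟩ := lemmaC2 hD hc hca x (show t < t + θ/2 by linarith) hε
    -- lower bound
    have hlow : ∃ N2, ∀ n ≥ N2, flim D a x t - ε ≤ D (a n) x t := by
      by_cases hneg : flim D a x t - ε < 0
      · exact ⟨0, fun n _ => le_trans hneg.le ((hD.mem _ _).nonneg t)⟩
      push_neg at hneg
      have h1 : flim D a x t - ε < flim D a x t := by linarith
      obtain ⟨u, hu⟩ := exists_lt_of_lt_ciSup h1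
      by_cases h : 0 < u ∧ u < t
      · rw [if_pos h] at hu
        obtain ⟨N2, hN2⟩ := exists_tail_gt hu
        refine ⟨N2, fun n hn => ?_⟩
        have h3 : (⨅ k : ℕ, D (a (N2 + k)) x u) ≤ D (a n) x u :=
          tail_le (fun p => (hD.mem _ _).nonneg u) hn
        exact le_trans (le_trans hN2.le h3) ((hD.mem _ _).mono' h.2.le)
      · rw [if_neg h] at hu; linarith
    obtain ⟨N2, hN2⟩ := hlow
    refine ⟨max N1 N2, fun n hn => ?_⟩
    have hu := hN1 n (le_trans (le_max_left _ _) hn)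
    have hl := hN2 n (le_trans (le_max_right _ _) hn)
    rw [Real.dist_eq, abs_lt]
    constructor <;> [linarith [ht'] ; linarith [ht']]

lemma le_of_wconv {φn : ℕ → ℝ → ℝ} {φ ψ : ℝ → ℝ} (hφ : MemDP φ) (hψm : Monotone ψ)
    (hw : WConv φn φ)
    (hb : ∀ s t : ℝ, s < t → ∀ ε > (0:ℝ), ∃ N, ∀ n ≥ N, φn n s ≤ ψ t + ε) : dpLE φ ψ := by
  intro t
  rw [← left_lim_eq hφ.mono' hφ.lc]
  apply csSup_le ⟨φ (t-1), Set.mem_image_of_mem _ (by simp only [Set.mem_Iio]; linarith)⟩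
  rintro y ⟨s, hs, rfl⟩
  obtain ⟨v, hv, hcv⟩ := exists_contAt hs hφ.mono'
  have h1 : φ v ≤ ψ t := by
    apply le_of_forall_pos_le_add
    intro ε hε
    obtain ⟨N, hN⟩ := hb v t hv.2 ε hε
    exact le_of_tendsto (hw v hcv) (eventually_atTop.mpr ⟨N, hN⟩)
  exact le_trans (hφ.mono' hv.1.le) h1

lemma lip1_flim (hD : IsPIMG D star) (hc : StarCont star) {a : ℕ → G} (hca : PCauchy D a) :
    Lip1 D star (flim D a) := by
  refine ⟨fun x => flim_memDP hD a x, fun x y => ?_⟩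
  have hwc : WConv (fun n => star (D x y) (D (a n) y)) (star (D x y) (flim D a y)) :=
    hc (fun _ => D x y) (fun n => D (a n) y) (D x y) (flim D a y)
      (fun _ => hD.mem x y) (fun n => hD.mem _ _) (hD.mem x y) (flim_memDP hD a y)
      (wconv_const _) (wconv_flim hD hc hca y)
  apply le_of_wconv (hD.tri.mem _ _ (hD.mem x y) (flim_memDP hD a y))
    (flim_memDP hD a x).mono' hwc
  intro s t hst ε hε
  obtain ⟨N, hN⟩ := lemmaC2 hD hc hca x hst hε
  refine ⟨N, fun n hn => ?_⟩
  have h1 : star (D x y) (D (a n) y) = star (D (a n) y) (D y x) := by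
    rw [hD.symm x y, hD.tri.comm _ _ (hD.mem y x) (hD.mem _ _)]
  have h2 : star (D (a n) y) (D y x) s ≤ D (a n) x s := hD.triangle_ineq (a n) y x s
  rw [h1]
  exact le_trans h2 (hN n hn)

lemma pisharp (hD : IsPIMG D star) (hc : StarCont star) {a : ℕ → G} {f : G → ℝ → ℝ}
    (hfm : ∀ x, MemDP (f x)) (hw : ∀ x, WConv (fun n => D (a n) x) (f x)) (y z : G) :
    dpLE (star (f y) (f z)) (D y z) := by
  have hwc : WConv (fun n => star (D (a n) y) (D (a n) z)) (star (f y) (f z)) :=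
    hc _ _ _ _ (fun n => hD.mem _ _) (fun n => hD.mem _ _) (hfm y) (hfm z) (hw y) (hw z)
  apply le_of_wconv (hD.tri.mem _ _ (hfm y) (hfm z)) (hD.mem y z).mono' hwc
  intro s t hst ε hε
  refine ⟨0, fun n _ => ?_⟩
  have h1 : star (D (a n) y) (D (a n) z) = star (D y (a n)) (D (a n) z) := by rw [hD.symm]
  have h2 : star (D y (a n)) (D (a n) z) s ≤ D y z s := hD.triangle_ineq y (a n) z s
  rw [h1]
  have := (hD.mem y z).mono' hst.le
  linarith [h2]

lemma lemmaF (hD : IsPIMG D star) {a : ℕ → G} (hca : PCauchy D a) {f : G → ℝ → ℝ}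
    (hfm : ∀ x, MemDP (f x)) (hw : ∀ x, WConv (fun n => D (a n) x) (f x))
    {η δ : ℝ} (hη : 0 < η) (hδ : 0 < δ) : ∃ N, ∀ n ≥ N, 1 - δ ≤ f (a n) η := by
  obtain ⟨N, hN⟩ := hca (η/2) (by positivity) (δ/2) (by positivity)
  refine ⟨N, fun n hn => ?_⟩
  obtain ⟨v, hv, hcv⟩ := exists_contAt (show η/2 < η by linarith) (hfm (a n)).mono'
  have h1 : 1 - δ/2 ≤ f (a n) v := by
    apply ge_of_tendsto (hw (a n) v hcv)
    filter_upwards [eventually_ge_atTop N] with p hp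
    exact le_trans (hN p hp n hn) ((hD.mem _ _).mono' hv.1.le)
  have h2 := (hfm (a n)).mono' hv.2.le
  linarith

end FlimSec

section ProdSec
variable {G : Type} [Group G] {D : G → G → ℝ → ℝ} {star : (ℝ → ℝ) → (ℝ → ℝ) → (ℝ → ℝ)}

lemma pcauchy_mul (hD : IsPIMG D star) (hc : StarCont star) {a b : ℕ → G}
    (hca : PCauchy D a) (hcb : PCauchy D b) : PCauchy D (fun n => a n * b n) := by
  intro t ht ε hε
  obtain ⟨δ, hδ, η, hη, hq⟩ := quant hD.tri hc (show (0:ℝ) < t/2 by linarith)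
    (show t/2 < t by linarith) (show (0:ℝ) < ε/2 by linarith)
  obtain ⟨N1, hN1⟩ := hca η hη δ hδ
  obtain ⟨N2, hN2⟩ := hcb (t/2) (by linarith) (ε/2) (by linarith)
  refine ⟨max N1 N2, fun n hn p hp => ?_⟩
  have e1 : D (a n * b n) (a p * b n) = D (a n) (a p) := hD.invR (a n) (a p) (b n)
  have e2 : D (a p * b n) (a p * b p) = D (b n) (b p) := hD.invL (b n) (b p) (a p)
  have h1 := hD.triangle_ineq (a n * b n) (a p * b n) (a p * b p) t
  rw [e1, e2] at h1
  have h2 : D (b n) (b p) (t/2) - ε/2 ≤ star (D (a n) (a p)) (D (b n) (b p)) t :=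
    hq _ _ (hD.mem _ _) (hD.mem _ _)
      (hN1 n (le_trans (le_max_left _ _) hn) p (le_trans (le_max_left _ _) hp))
  have h3 := hN2 n (le_trans (le_max_right _ _) hn) p (le_trans (le_max_right _ _) hp)
  linarith

lemma sconv_bdd (htri : IsTriangle star) {f g : G → ℝ → ℝ}
    (hfm : ∀ x, MemDP (f x)) (hgm : ∀ x, MemDP (g x)) (x : G) (t : ℝ) :
    BddAbove (Set.range fun y : G => star (f (x * y⁻¹)) (g y) t) :=
  bdd1 fun y => (htri.mem _ _ (hfm _) (hgm _)).le_one t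

lemma sconv_eq_flim (hD : IsPIMG D star) (hc : StarCont star)
    {a b : ℕ → G} {f g : G → ℝ → ℝ}
    (hca : PCauchy D a) (hcb : PCauchy D b)
    (hfm : ∀ x, MemDP (f x)) (hgm : ∀ x, MemDP (g x))
    (hwf : ∀ x, WConv (fun n => D (a n) x) (f x))
    (hwg : ∀ x, WConv (fun n => D (b n) x) (g x)) :
    sconv star f g = flim D (fun n => a n * b n) := by
  haveI : Nonempty G := ⟨1⟩
  have hcc : PCauchy D (fun n => a n * b n) := pcauchy_mul hD hc hca hcb
  funext x t
  set c : ℕ → G := fun n => a n * b n with hcdef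
  apply le_antisymm
  · show (⨆ y : G, star (f (x * y⁻¹)) (g y) t) ≤ _
    apply ciSup_le
    intro y
    have key : dpLE (star (f (x * y⁻¹)) (g y)) (flim D c x) := by
      have hwc : WConv (fun n => star (D (a n) (x * y⁻¹)) (D (b n) y))
          (star (f (x * y⁻¹)) (g y)) :=
        hc _ _ _ _ (fun n => hD.mem _ _) (fun n => hD.mem _ _) (hfm _) (hgm _)
          (hwf _) (hwg _)
      apply le_of_wconv (hD.tri.mem _ _ (hfm _) (hgm _)) (flim_memDP hD c x).mono' hwc
      intro s t' hst ε hε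
      obtain ⟨N, hN⟩ := lemmaC2 hD hc hcc x hst hε
      refine ⟨N, fun n hn => ?_⟩
      have e1 : D (a n) (x * y⁻¹) = D (c n) (x * y⁻¹ * b n) :=
        (hD.invR (a n) (x * y⁻¹) (b n)).symm
      have e2 : D (b n) y = D (x * y⁻¹ * b n) x := by
        have h := hD.invL (b n) y (x * y⁻¹)
        rw [show x * y⁻¹ * y = x by group] at h
        exact h.symm
      rw [e1, e2]
      exact le_trans (hD.triangle_ineq (c n) (x * y⁻¹ * b n) x s) (hN n hn)
    exact key t
  · show _ ≤ (⨆ y : G, star (f (x * y⁻¹)) (g y) t)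
    apply ciSup_le
    intro u
    by_cases hcond : 0 < u ∧ u < t
    swap
    · rw [if_neg hcond]
      exact le_trans ((hD.tri.mem _ _ (hfm (x * (1:G)⁻¹)) (hgm 1)).nonneg t)
        (le_ciSup (sconv_bdd hD.tri hfm hgm x t) 1)
    rw [if_pos hcond]
    obtain ⟨hu, hut⟩ := hcond
    apply le_of_forall_pos_le_add
    intro ε hε
    set s1 := (u + t)/2 with hs1
    set s2 := (u + s1)/2 with hs2
    have hus1 : u < s1 := by rw [hs1]; linarith
    have hus2 : u < s2 := by rw [hs2]; linarith
    have hs2s1 : s2 < s1 := by rw [hs2]; linarith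
    have hs1t : s1 < t := by rw [hs1]; linarith
    have hs1pos : 0 < s1 := by linarith
    obtain ⟨δ1, hδ1, η1, hη1, hq1⟩ := quant hD.tri hc hs1pos hs1t (show (0:ℝ) < ε/2 by linarith)
    obtain ⟨N1, hN1⟩ := lemmaF hD hcb hgm hwg hη1 hδ1
    obtain ⟨δ2, hδ2, η2, hη2, hq2⟩ := quant hD.tri hc hu hus2 (show (0:ℝ) < ε/2 by linarith)
    obtain ⟨N2, hN2⟩ := hca η2 hη2 δ2 hδ2
    apply ciSup_le
    intro N
    set n := max N (max N1 N2) with hndef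
    have hnN : N ≤ n := le_max_left _ _
    have hnN1 : N1 ≤ n := le_trans (le_max_left _ _) (le_max_right _ _)
    have hnN2 : N2 ≤ n := le_trans (le_max_right _ _) (le_max_right _ _)
    have htail : (⨅ k : ℕ, D (c (N + k)) x u) ≤ D (c n) x u :=
      tail_le (fun p => (hD.mem _ _).nonneg u) hnN
    have hB : D (c n) x u - ε/2 ≤ f (x * (b n)⁻¹) s1 := by
      obtain ⟨v, hv, hcv⟩ := exists_contAt hs2s1 (hfm (x * (b n)⁻¹)).mono'
      have hv1 : f (x * (b n)⁻¹) v ≤ f (x * (b n)⁻¹) s1 := (hfm _).mono' hv.2.le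
      have hlim : D (c n) x u - ε/2 ≤ f (x * (b n)⁻¹) v := by
        apply ge_of_tendsto (hwf (x * (b n)⁻¹) v hcv)
        filter_upwards [eventually_ge_atTop N2] with p hp
        have e3 : D (a p) (x * (b n)⁻¹) = D (a p * b n) x := by
          have h := hD.invR (a p) (x * (b n)⁻¹) (b n)
          rw [show x * (b n)⁻¹ * b n = x by group] at h
          exact h.symm
        rw [e3]
        have e4 : D (a p * b n) (c n) = D (a p) (a n) := hD.invR (a p) (a n) (b n)
        have h5 : D (c n) x u - ε/2 ≤ star (D (a p * b n) (c n)) (D (c n) x) s2 := by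
          rw [e4]
          exact hq2 _ _ (hD.mem _ _) (hD.mem _ _) (hN2 p hp n hnN2)
        have h6 : star (D (a p * b n) (c n)) (D (c n) x) s2 ≤
            star (D (a p * b n) (c n)) (D (c n) x) v :=
          (hD.tri.mem _ _ (hD.mem _ _) (hD.mem _ _)).mono' hv.1.le
        have h7 := hD.triangle_ineq (a p * b n) (c n) x v
        linarith [h7]
      linarith
    have hA : f (x * (b n)⁻¹) s1 - ε/2 ≤ star (f (x * (b n)⁻¹)) (g (b n)) t := by
      have h7 : 1 - δ1 ≤ g (b n) η1 := hN1 n hnN1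
      have h8 := hq1 (g (b n)) (f (x * (b n)⁻¹)) (hgm _) (hfm _) h7
      rwa [hD.tri.comm _ _ (hgm _) (hfm _)] at h8
    have hS : star (f (x * (b n)⁻¹)) (g (b n)) t ≤ ⨆ y : G, star (f (x * y⁻¹)) (g y) t :=
      le_ciSup (sconv_bdd hD.tri hfm hgm x t) (b n)
    linarith

end ProdSec

section PartsSec
variable {G : Type} [Group G] {D : G → G → ℝ → ℝ} {star : (ℝ → ℝ) → (ℝ → ℝ) → (ℝ → ℝ)}

lemma flim_eq_of_wconv (hD : IsPIMG D star) (hc : StarCont star) {a : ℕ → G}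
    {f : G → ℝ → ℝ} (hca : PCauchy D a)
    (hfm : ∀ x, MemDP (f x)) (hwf : ∀ x, WConv (fun n => D (a n) x) (f x)) :
    flim D a = f :=
  funext fun x => wconv_unique (flim_memDP hD a x) (hfm x) (wconv_flim hD hc hca x) (hwf x)

lemma inPi_flim (hD : IsPIMG D star) (hc : StarCont star) {a : ℕ → G} (hca : PCauchy D a) :
    InPi D star (flim D a) :=
  ⟨lip1_flim hD hc hca, a, hca, wconv_flim hD hc hca⟩

lemma part1 (hD : IsPIMG D star) (hc : StarCont star) {f g : G → ℝ → ℝ}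
    (hf : InPi D star f) (hg : InPi D star g) : InPi D star (sconv star f g) := by
  obtain ⟨hlf, a, hca, hwf⟩ := hf
  obtain ⟨hlg, b, hcb, hwg⟩ := hg
  rw [sconv_eq_flim hD hc hca hcb hlf.1 hlg.1 hwf hwg]
  exact inPi_flim hD hc (pcauchy_mul hD hc hca hcb)

lemma dlt_lip1 (hD : IsPIMG D star) (c : G) : Lip1 D star (dlt D c) :=
  ⟨fun x => hD.mem x c, fun x y => hD.triangle_ineq x y c⟩

lemma dlt_wconv (hD : IsPIMG D star) (c : G) :
    ∀ x, WConv (fun _ : ℕ => D c x) (dlt D c x) := by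
  intro x t _
  have : dlt D c x t = D c x t := by rw [dlt, hD.symm x c]
  rw [this]
  exact tendsto_const_nhds

lemma dlt_pcauchy (hD : IsPIMG D star) (c : G) : PCauchy D (fun _ : ℕ => c) := by
  intro t ht ε hε
  refine ⟨0, fun n _ p _ => ?_⟩
  rw [(hD.eq_iff c c).mpr rfl]
  rw [show H0 t = 1 from if_pos ht]
  linarith

lemma dlt_inPi (hD : IsPIMG D star) (c : G) : InPi D star (dlt D c) :=
  ⟨dlt_lip1 hD c, fun _ => c, dlt_pcauchy hD c, dlt_wconv hD c⟩

lemma part2 (hD : IsPIMG D star) (hc : StarCont star) {f : G → ℝ → ℝ}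
    (hf : InPi D star f) :
    sconv star f (dlt D 1) = f ∧ sconv star (dlt D 1) f = f := by
  obtain ⟨hlf, a, hca, hwf⟩ := hf
  have hgm : ∀ x, MemDP (dlt D 1 x) := fun x => hD.mem x 1
  constructor
  · rw [sconv_eq_flim hD hc hca (dlt_pcauchy hD 1) hlf.1 hgm hwf
      (dlt_wconv hD 1)]
    rw [show (fun n => a n * (fun _ : ℕ => (1:G)) n) = a from funext fun n => mul_one _]
    exact flim_eq_of_wconv hD hc hca hlf.1 hwf
  · rw [sconv_eq_flim hD hc (dlt_pcauchy hD 1) hca hgm hlf.1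
      (dlt_wconv hD 1) hwf]
    rw [show (fun n => (fun _ : ℕ => (1:G)) n * a n) = a from funext fun n => one_mul _]
    exact flim_eq_of_wconv hD hc hca hlf.1 hwf

lemma inv_pcauchy (hD : IsPIMG D star) {a : ℕ → G} (hca : PCauchy D a) :
    PCauchy D (fun n => (a n)⁻¹) := by
  intro t ht ε hε
  obtain ⟨N, hN⟩ := hca t ht ε hε
  refine ⟨N, fun n hn p hp => ?_⟩
  have e : D (a n)⁻¹ (a p)⁻¹ = D (a p) (a n) := by
    have h1 := hD.invR (a n)⁻¹ (a p)⁻¹ (a p)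
    rw [show (a p)⁻¹ * a p = 1 by group] at h1
    have h2 := hD.invL ((a n)⁻¹ * a p) 1 (a n)
    rw [show a n * ((a n)⁻¹ * a p) = a p by group, mul_one] at h2
    rw [← h1, ← h2]
  rw [e]
  exact hN p hp n hn

lemma part3 (hD : IsPIMG D star) (hc : StarCont star) {f : G → ℝ → ℝ}
    (hf : InPi D star f) : ∃ g, InPi D star g ∧
      sconv star f g = dlt D 1 ∧ sconv star g f = dlt D 1 := by
  obtain ⟨hlf, a, hca, hwf⟩ := hf
  have hca' := inv_pcauchy hD hca
  have hgm : ∀ x, MemDP (flim D (fun n => (a n)⁻¹) x) := fun x => flim_memDP hD _ x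
  have hwg := wconv_flim hD hc hca'
  refine ⟨flim D (fun n => (a n)⁻¹), inPi_flim hD hc hca', ?_, ?_⟩
  · rw [sconv_eq_flim hD hc hca hca' hlf.1 hgm hwf hwg]
    rw [show (fun n => a n * ((fun m => (a m)⁻¹) n)) = fun _ : ℕ => (1:G) from
      funext fun n => by group]
    exact flim_eq_of_wconv hD hc (dlt_pcauchy hD 1) (fun x => hD.mem x 1 : ∀ x, MemDP (dlt D 1 x)) (dlt_wconv hD 1)
  · rw [sconv_eq_flim hD hc hca' hca hgm hlf.1 hwg hwf]
    rw [show (fun n => ((fun m => (a m)⁻¹) n) * a n) = fun _ : ℕ => (1:G) from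
      funext fun n => by group]
    exact flim_eq_of_wconv hD hc (dlt_pcauchy hD 1) (fun x => hD.mem x 1 : ∀ x, MemDP (dlt D 1 x)) (dlt_wconv hD 1)

lemma Dinv (hD : IsPIMG D star) (x y z : G) : D (x * y⁻¹) (x * z⁻¹) = D y z := by
  have h1 : D (x * y⁻¹) (x * z⁻¹) = D y⁻¹ z⁻¹ := hD.invL y⁻¹ z⁻¹ x
  have h2 := hD.invR y⁻¹ z⁻¹ z
  rw [show (z⁻¹ : G) * z = 1 by group] at h2
  have h3 := hD.invL y z y⁻¹
  rw [show (y⁻¹ : G) * y = 1 by group] at h3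
  have h4 : D 1 (y⁻¹ * z) = D (y⁻¹ * z) 1 := hD.symm _ _
  rw [h1, ← h2, ← h4, ← h3]

end PartsSec

section DDSec
variable {G : Type} [Group G] {D : G → G → ℝ → ℝ} {star : (ℝ → ℝ) → (ℝ → ℝ) → (ℝ → ℝ)}

lemma DD_bdd (htri : IsTriangle star) {f g : G → ℝ → ℝ}
    (hfm : ∀ x, MemDP (f x)) (hgm : ∀ x, MemDP (g x)) (t : ℝ) :
    BddAbove (Set.range fun x : G => star (f x) (g x) t) :=
  bdd1 fun x => (htri.mem _ _ (hfm x) (hgm x)).le_one t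

lemma DD_memDP (htri : IsTriangle star) {f g : G → ℝ → ℝ}
    (hfm : ∀ x, MemDP (f x)) (hgm : ∀ x, MemDP (g x)) : MemDP (DD star f g) := by
  haveI : Nonempty G := ⟨1⟩
  exact memDP_iSup (fun x : G => star (f x) (g x)) (fun x => htri.mem _ _ (hfm x) (hgm x))

lemma le_DD (htri : IsTriangle star) {f g : G → ℝ → ℝ}
    (hfm : ∀ x, MemDP (f x)) (hgm : ∀ x, MemDP (g x)) (x : G) (t : ℝ) :
    star (f x) (g x) t ≤ DD star f g t :=
  le_ciSup (DD_bdd htri hfm hgm t) x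

lemma DD_comm (htri : IsTriangle star) {f g : G → ℝ → ℝ}
    (hfm : ∀ x, MemDP (f x)) (hgm : ∀ x, MemDP (g x)) : DD star f g = DD star g f := by
  funext t
  show (⨆ x : G, star (f x) (g x) t) = ⨆ x : G, star (g x) (f x) t
  congr 1
  funext x
  rw [htri.comm _ _ (hfm x) (hgm x)]

lemma memDP_sconv (htri : IsTriangle star) {f g : G → ℝ → ℝ}
    (hfm : ∀ x, MemDP (f x)) (hgm : ∀ x, MemDP (g x)) (x : G) :
    MemDP (sconv star f g x) := by
  haveI : Nonempty G := ⟨1⟩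
  exact memDP_iSup (fun y : G => star (f (x * y⁻¹)) (g y))
    (fun y => htri.mem _ _ (hfm _) (hgm _))

/-- triangle inequality for DD with middle element satisfying the sharp property -/
lemma DDtri (hD : IsPIMG D star) (hsc : SupCont star) {f g k : G → ℝ → ℝ}
    (hfm : ∀ x, MemDP (f x)) (hgm : ∀ x, MemDP (g x)) (hkm : ∀ x, MemDP (k x))
    (hsharp : ∀ y z, dpLE (star (g y) (g z)) (D y z))
    (hlip : ∀ x z, dpLE (star (D x z) (k z)) (k x)) :
    dpLE (star (DD star f g) (DD star g k)) (DD star f k) := by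
  haveI : Nonempty G := ⟨1⟩
  intro t
  have htri := hD.tri
  have hA : ∀ x, MemDP (star (f x) (g x)) := fun x => htri.mem _ _ (hfm x) (hgm x)
  have hB : ∀ z, MemDP (star (g z) (k z)) := fun z => htri.mem _ _ (hgm z) (hkm z)
  have e1 := hsc G ⟨1⟩ (fun x => star (f x) (g x)) (DD star g k) hA
    (DD_memDP htri hgm hkm) t
  rw [show (fun s => ⨆ x : G, star (f x) (g x) s) = DD star f g from rfl] at e1
  rw [← e1]
  apply ciSup_le
  intro x
  have e2 : star (star (f x) (g x)) (DD star g k) t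
      = star (DD star g k) (star (f x) (g x)) t := by
    rw [htri.comm _ _ (hA x) (DD_memDP htri hgm hkm)]
  rw [e2]
  have e3 := hsc G ⟨1⟩ (fun z => star (g z) (k z)) (star (f x) (g x)) hB (hA x) t
  rw [show (fun s => ⨆ z : G, star (g z) (k z) s) = DD star g k from rfl] at e3
  rw [← e3]
  apply ciSup_le
  intro z
  -- star (star (g z) (k z)) (star (f x) (g x)) t ≤ DD f k t
  have e4 : star (star (g z) (k z)) (star (f x) (g x))
      = star (star (f x) (g x)) (star (g z) (k z)) :=
    htri.comm _ _ (hB z) (hA x)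
  have e5 : star (g z) (k z) = star (k z) (g z) := htri.comm _ _ (hgm z) (hkm z)
  have e6 : star (star (f x) (g x)) (star (k z) (g z))
      = star (star (f x) (k z)) (star (g x) (g z)) :=
    star_rearrange htri (hfm x) (hgm x) (hkm z) (hgm z)
  have mfk : MemDP (star (f x) (k z)) := htri.mem _ _ (hfm x) (hkm z)
  have mgg : MemDP (star (g x) (g z)) := htri.mem _ _ (hgm x) (hgm z)
  have h7 : dpLE (star (star (f x) (k z)) (star (g x) (g z)))
      (star (star (f x) (k z)) (D x z)) :=
    star_mono_right htri mfk mgg (hD.mem x z) (hsharp x z)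
  have e8 : star (star (f x) (k z)) (D x z) = star (f x) (star (k z) (D x z)) :=
    (htri.assoc (f x) (k z) (D x z) (hfm x) (hkm z) (hD.mem x z)).symm
  have h9 : dpLE (star (f x) (star (k z) (D x z))) (star (f x) (k x)) := by
    apply star_mono_right htri (hfm x) (htri.mem _ _ (hkm z) (hD.mem x z)) (hkm x)
    intro s
    rw [htri.comm _ _ (hkm z) (hD.mem x z)]
    exact hlip x z s
  calc star (star (g z) (k z)) (star (f x) (g x)) t
      = star (star (f x) (k z)) (star (g x) (g z)) t := by rw [e4, e5, e6]
    _ ≤ star (star (f x) (k z)) (D x z) t := h7 t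
    _ = star (f x) (star (k z) (D x z)) t := by rw [e8]
    _ ≤ star (f x) (k x) t := h9 t
    _ ≤ DD star f k t := le_DD htri hfm hkm x t

lemma K_wconv (hD : IsPIMG D star) (hc : StarCont star) {c : ℕ → G}
    (hck : PCauchy D c) {k : G → ℝ → ℝ} (hkm : ∀ x, MemDP (k x))
    (hwk : ∀ x, WConv (fun n => D (c n) x) (k x)) :
    WConv (fun n => star (k (c n)) (k (c n))) H0 := by
  intro t _
  rcases le_or_gt t 0 with ht | ht
  · have hz : ∀ n, star (k (c n)) (k (c n)) t = 0 :=
      fun n => (hD.tri.mem _ _ (hkm _) (hkm _)).zero t ht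
    simp only [hz, H0, if_neg (not_lt.mpr ht)]
    exact tendsto_const_nhds
  · rw [show H0 t = 1 from if_pos ht, Metric.tendsto_atTop]
    intro ε' hε'
    obtain ⟨δ, hδ, η, hη, hq⟩ := quant hD.tri hc (show (0:ℝ) < t/2 by linarith)
      (show t/2 < t by linarith) (show (0:ℝ) < ε'/4 by linarith)
    obtain ⟨N1, h1⟩ := lemmaF hD hck hkm hwk hη hδ
    obtain ⟨N2, h2⟩ := lemmaF hD hck hkm hwk (show (0:ℝ) < t/2 by linarith)
      (show (0:ℝ) < ε'/4 by linarith)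
    refine ⟨max N1 N2, fun n hn => ?_⟩
    have hv1 : k (c n) (t/2) - ε'/4 ≤ star (k (c n)) (k (c n)) t :=
      hq _ _ (hkm _) (hkm _) (h1 n (le_trans (le_max_left _ _) hn))
    have hv2 : 1 - ε'/4 ≤ k (c n) (t/2) := h2 n (le_trans (le_max_right _ _) hn)
    have hv3 : star (k (c n)) (k (c n)) t ≤ 1 := (hD.tri.mem _ _ (hkm _) (hkm _)).le_one t
    rw [Real.dist_eq, abs_lt]
    constructor <;> linarith

end DDSec

section P4
variable {G : Type} [Group G] {D : G → G → ℝ → ℝ} {star : (ℝ → ℝ) → (ℝ → ℝ) → (ℝ → ℝ)}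

lemma part4a (hD : IsPIMG D star) (hc : StarCont star) (hsc : SupCont star)
    {f g k : G → ℝ → ℝ} (hlf : Lip1 D star f) (hlg : Lip1 D star g)
    (hlk : Lip1 D star k) {c : ℕ → G} (hck : PCauchy D c)
    (hwk : ∀ x, WConv (fun n => D (c n) x) (k x)) :
    DD star (sconv star f k) (sconv star g k) = DD star f g := by
  haveI : Nonempty G := ⟨1⟩
  have htri := hD.tri
  have hfm := hlf.1
  have hgm := hlg.1
  have hkm := hlk.1
  have hsharp := pisharp hD hc hkm hwk
  have msf : ∀ x, MemDP (sconv star f k x) := memDP_sconv htri hfm hkm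
  have msg : ∀ x, MemDP (sconv star g k x) := memDP_sconv htri hgm hkm
  funext t
  apply le_antisymm
  · show (⨆ x : G, star (sconv star f k x) (sconv star g k x) t) ≤ _
    apply ciSup_le
    intro x
    have mA : ∀ y, MemDP (star (f (x * y⁻¹)) (k y)) := fun y => htri.mem _ _ (hfm _) (hkm _)
    have mB : ∀ z, MemDP (star (g (x * z⁻¹)) (k z)) := fun z => htri.mem _ _ (hgm _) (hkm _)
    have e1 := hsc G ⟨1⟩ (fun y => star (f (x * y⁻¹)) (k y)) (sconv star g k x) mA (msg x) t
    rw [show (fun s => ⨆ y : G, star (f (x * y⁻¹)) (k y) s) = sconv star f k x from rfl] at e1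
    rw [← e1]
    apply ciSup_le
    intro y
    have e2 : star (star (f (x * y⁻¹)) (k y)) (sconv star g k x) t
        = star (sconv star g k x) (star (f (x * y⁻¹)) (k y)) t := by
      rw [htri.comm _ _ (mA y) (msg x)]
    rw [e2]
    have e3 := hsc G ⟨1⟩ (fun z => star (g (x * z⁻¹)) (k z)) (star (f (x * y⁻¹)) (k y))
      mB (mA y) t
    rw [show (fun s => ⨆ z : G, star (g (x * z⁻¹)) (k z) s) = sconv star g k x from rfl] at e3
    rw [← e3]
    apply ciSup_le
    intro z
    have mfg : MemDP (star (f (x * y⁻¹)) (g (x * z⁻¹))) := htri.mem _ _ (hfm _) (hgm _)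
    have mkk : MemDP (star (k y) (k z)) := htri.mem _ _ (hkm _) (hkm _)
    have e4 : star (star (g (x * z⁻¹)) (k z)) (star (f (x * y⁻¹)) (k y))
        = star (star (f (x * y⁻¹)) (k y)) (star (g (x * z⁻¹)) (k z)) :=
      htri.comm _ _ (mB z) (mA y)
    have e6 : star (star (f (x * y⁻¹)) (k y)) (star (g (x * z⁻¹)) (k z))
        = star (star (f (x * y⁻¹)) (g (x * z⁻¹))) (star (k y) (k z)) :=
      star_rearrange htri (hfm _) (hkm _) (hgm _) (hkm _)
    have h7 : dpLE (star (star (f (x * y⁻¹)) (g (x * z⁻¹))) (star (k y) (k z)))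
        (star (star (f (x * y⁻¹)) (g (x * z⁻¹))) (D y z)) :=
      star_mono_right htri mfg mkk (hD.mem y z) (hsharp y z)
    have e8 : star (star (f (x * y⁻¹)) (g (x * z⁻¹))) (D y z)
        = star (f (x * y⁻¹)) (star (g (x * z⁻¹)) (D y z)) :=
      (htri.assoc _ _ _ (hfm _) (hgm _) (hD.mem y z)).symm
    have h9 : dpLE (star (f (x * y⁻¹)) (star (g (x * z⁻¹)) (D y z)))
        (star (f (x * y⁻¹)) (g (x * y⁻¹))) := by
      apply star_mono_right htri (hfm _) (htri.mem _ _ (hgm _) (hD.mem y z)) (hgm _)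
      intro s
      rw [htri.comm _ _ (hgm _) (hD.mem y z), ← Dinv hD x y z]
      exact hlg.2 (x * y⁻¹) (x * z⁻¹) s
    calc star (star (g (x * z⁻¹)) (k z)) (star (f (x * y⁻¹)) (k y)) t
        = star (star (f (x * y⁻¹)) (g (x * z⁻¹))) (star (k y) (k z)) t := by rw [e4, e6]
      _ ≤ star (star (f (x * y⁻¹)) (g (x * z⁻¹))) (D y z) t := h7 t
      _ = star (f (x * y⁻¹)) (star (g (x * z⁻¹)) (D y z)) t := by rw [e8]
      _ ≤ star (f (x * y⁻¹)) (g (x * y⁻¹)) t := h9 t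
      _ ≤ DD star f g t := le_DD htri hfm hgm (x * y⁻¹) t
  · show (⨆ x : G, star (f x) (g x) t) ≤ _
    apply ciSup_le
    intro x
    have mfg : MemDP (star (f x) (g x)) := htri.mem _ _ (hfm x) (hgm x)
    have hψm : Monotone (DD star (sconv star f k) (sconv star g k)) :=
      (DD_memDP htri msf msg).mono'
    have hKw := K_wconv hD hc hck hkm hwk
    have hwc := hc (fun _ => star (f x) (g x)) (fun n => star (k (c n)) (k (c n)))
      (star (f x) (g x)) H0 (fun _ => mfg) (fun n => htri.mem _ _ (hkm _) (hkm _))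
      mfg memDP_H0 (wconv_const _) hKw
    rw [star_H0_right htri mfg] at hwc
    have key : dpLE (star (f x) (g x)) (DD star (sconv star f k) (sconv star g k)) := by
      apply le_of_wconv mfg hψm hwc
      intro s t' hst ε hε
      refine ⟨0, fun n _ => ?_⟩
      have mkk : MemDP (star (k (c n)) (k (c n))) := htri.mem _ _ (hkm _) (hkm _)
      have e1 : star (star (f x) (g x)) (star (k (c n)) (k (c n)))
          = star (star (f x) (k (c n))) (star (g x) (k (c n))) :=
        star_rearrange htri (hfm x) (hgm x) (hkm _) (hkm _)
      have hsub1 : dpLE (star (f x) (k (c n))) (sconv star f k (x * c n)) := by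
        intro s'
        have h := le_ciSup (sconv_bdd htri hfm hkm (x * c n) s') (c n)
        rw [show x * c n * (c n)⁻¹ = x by group] at h
        exact h
      have hsub2 : dpLE (star (g x) (k (c n))) (sconv star g k (x * c n)) := by
        intro s'
        have h := le_ciSup (sconv_bdd htri hgm hkm (x * c n) s') (c n)
        rw [show x * c n * (c n)⁻¹ = x by group] at h
        exact h
      have h2 : star (star (f x) (k (c n))) (star (g x) (k (c n))) s ≤
          star (sconv star f k (x * c n)) (sconv star g k (x * c n)) s :=
        star_mono2 htri (htri.mem _ _ (hfm x) (hkm _)) (htri.mem _ _ (hgm x) (hkm _))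
          (msf _) (msg _) hsub1 hsub2 s
      have h3 : star (sconv star f k (x * c n)) (sconv star g k (x * c n)) s ≤
          DD star (sconv star f k) (sconv star g k) s := le_DD htri msf msg (x * c n) s
      have h4 := hψm hst.le
      calc star (star (f x) (g x)) (star (k (c n)) (k (c n))) s
          = star (star (f x) (k (c n))) (star (g x) (k (c n))) s := by rw [e1]
        _ ≤ DD star (sconv star f k) (sconv star g k) s := le_trans h2 h3
        _ ≤ DD star (sconv star f k) (sconv star g k) t' + ε := by linarith
    exact key t

lemma part4b (hD : IsPIMG D star) (hc : StarCont star) (hsc : SupCont star)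
    {f g k : G → ℝ → ℝ} (hlf : Lip1 D star f) (hlg : Lip1 D star g)
    (hlk : Lip1 D star k) {c : ℕ → G} (hck : PCauchy D c)
    (hwk : ∀ x, WConv (fun n => D (c n) x) (k x)) :
    DD star (sconv star k f) (sconv star k g) = DD star f g := by
  haveI : Nonempty G := ⟨1⟩
  have htri := hD.tri
  have hfm := hlf.1
  have hgm := hlg.1
  have hkm := hlk.1
  have hsharp := pisharp hD hc hkm hwk
  have msf : ∀ x, MemDP (sconv star k f x) := memDP_sconv htri hkm hfm
  have msg : ∀ x, MemDP (sconv star k g x) := memDP_sconv htri hkm hgm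
  funext t
  apply le_antisymm
  · show (⨆ x : G, star (sconv star k f x) (sconv star k g x) t) ≤ _
    apply ciSup_le
    intro x
    have mA : ∀ y, MemDP (star (k (x * y⁻¹)) (f y)) := fun y => htri.mem _ _ (hkm _) (hfm _)
    have mB : ∀ z, MemDP (star (k (x * z⁻¹)) (g z)) := fun z => htri.mem _ _ (hkm _) (hgm _)
    have e1 := hsc G ⟨1⟩ (fun y => star (k (x * y⁻¹)) (f y)) (sconv star k g x) mA (msg x) t
    rw [show (fun s => ⨆ y : G, star (k (x * y⁻¹)) (f y) s) = sconv star k f x from rfl] at e1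
    rw [← e1]
    apply ciSup_le
    intro y
    have e2 : star (star (k (x * y⁻¹)) (f y)) (sconv star k g x) t
        = star (sconv star k g x) (star (k (x * y⁻¹)) (f y)) t := by
      rw [htri.comm _ _ (mA y) (msg x)]
    rw [e2]
    have e3 := hsc G ⟨1⟩ (fun z => star (k (x * z⁻¹)) (g z)) (star (k (x * y⁻¹)) (f y))
      mB (mA y) t
    rw [show (fun s => ⨆ z : G, star (k (x * z⁻¹)) (g z) s) = sconv star k g x from rfl] at e3
    rw [← e3]
    apply ciSup_le
    intro z
    have mfg : MemDP (star (f y) (g z)) := htri.mem _ _ (hfm _) (hgm _)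
    have mkk : MemDP (star (k (x * y⁻¹)) (k (x * z⁻¹))) := htri.mem _ _ (hkm _) (hkm _)
    have e4 : star (star (k (x * z⁻¹)) (g z)) (star (k (x * y⁻¹)) (f y))
        = star (star (k (x * y⁻¹)) (f y)) (star (k (x * z⁻¹)) (g z)) :=
      htri.comm _ _ (mB z) (mA y)
    have e6 : star (star (k (x * y⁻¹)) (f y)) (star (k (x * z⁻¹)) (g z))
        = star (star (k (x * y⁻¹)) (k (x * z⁻¹))) (star (f y) (g z)) :=
      star_rearrange htri (hkm _) (hfm _) (hkm _) (hgm _)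
    have e7 : star (star (k (x * y⁻¹)) (k (x * z⁻¹))) (star (f y) (g z))
        = star (star (f y) (g z)) (star (k (x * y⁻¹)) (k (x * z⁻¹))) :=
      htri.comm _ _ mkk mfg
    have h7 : dpLE (star (star (f y) (g z)) (star (k (x * y⁻¹)) (k (x * z⁻¹))))
        (star (star (f y) (g z)) (D y z)) := by
      apply star_mono_right htri mfg mkk (hD.mem y z)
      intro s
      have := hsharp (x * y⁻¹) (x * z⁻¹) s
      rwa [Dinv hD x y z] at this
    have e8 : star (star (f y) (g z)) (D y z)
        = star (f y) (star (g z) (D y z)) :=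
      (htri.assoc _ _ _ (hfm _) (hgm _) (hD.mem y z)).symm
    have h9 : dpLE (star (f y) (star (g z) (D y z))) (star (f y) (g y)) := by
      apply star_mono_right htri (hfm _) (htri.mem _ _ (hgm _) (hD.mem y z)) (hgm _)
      intro s
      rw [htri.comm _ _ (hgm _) (hD.mem y z)]
      exact hlg.2 y z s
    calc star (star (k (x * z⁻¹)) (g z)) (star (k (x * y⁻¹)) (f y)) t
        = star (star (f y) (g z)) (star (k (x * y⁻¹)) (k (x * z⁻¹))) t := by rw [e4, e6, e7]
      _ ≤ star (star (f y) (g z)) (D y z) t := h7 t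
      _ = star (f y) (star (g z) (D y z)) t := by rw [e8]
      _ ≤ star (f y) (g y) t := h9 t
      _ ≤ DD star f g t := le_DD htri hfm hgm y t
  · show (⨆ x : G, star (f x) (g x) t) ≤ _
    apply ciSup_le
    intro x
    have mfg : MemDP (star (f x) (g x)) := htri.mem _ _ (hfm x) (hgm x)
    have hψm : Monotone (DD star (sconv star k f) (sconv star k g)) :=
      (DD_memDP htri msf msg).mono'
    have hKw := K_wconv hD hc hck hkm hwk
    have hwc := hc (fun _ => star (f x) (g x)) (fun n => star (k (c n)) (k (c n)))
      (star (f x) (g x)) H0 (fun _ => mfg) (fun n => htri.mem _ _ (hkm _) (hkm _))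
      mfg memDP_H0 (wconv_const _) hKw
    rw [star_H0_right htri mfg] at hwc
    have key : dpLE (star (f x) (g x)) (DD star (sconv star k f) (sconv star k g)) := by
      apply le_of_wconv mfg hψm hwc
      intro s t' hst ε hε
      refine ⟨0, fun n _ => ?_⟩
      have mkk : MemDP (star (k (c n)) (k (c n))) := htri.mem _ _ (hkm _) (hkm _)
      have e1 : star (star (k (c n)) (f x)) (star (k (c n)) (g x))
          = star (star (k (c n)) (k (c n))) (star (f x) (g x)) :=
        star_rearrange htri (hkm _) (hfm x) (hkm _) (hgm x)
      have e2 : star (star (k (c n)) (k (c n))) (star (f x) (g x))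
          = star (star (f x) (g x)) (star (k (c n)) (k (c n))) :=
        htri.comm _ _ mkk mfg
      have hsub1 : dpLE (star (k (c n)) (f x)) (sconv star k f (c n * x)) := by
        intro s'
        have h := le_ciSup (sconv_bdd htri hkm hfm (c n * x) s') x
        rw [show c n * x * x⁻¹ = c n by group] at h
        exact h
      have hsub2 : dpLE (star (k (c n)) (g x)) (sconv star k g (c n * x)) := by
        intro s'
        have h := le_ciSup (sconv_bdd htri hkm hgm (c n * x) s') x
        rw [show c n * x * x⁻¹ = c n by group] at h
        exact h
      have h2 : star (star (k (c n)) (f x)) (star (k (c n)) (g x)) s ≤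
          star (sconv star k f (c n * x)) (sconv star k g (c n * x)) s :=
        star_mono2 htri (htri.mem _ _ (hkm _) (hfm x)) (htri.mem _ _ (hkm _) (hgm x))
          (msf _) (msg _) hsub1 hsub2 s
      have h3 : star (sconv star k f (c n * x)) (sconv star k g (c n * x)) s ≤
          DD star (sconv star k f) (sconv star k g) s := le_DD htri msf msg (c n * x) s
      have h4 := hψm hst.le
      calc star (star (f x) (g x)) (star (k (c n)) (k (c n))) s
          = star (star (k (c n)) (f x)) (star (k (c n)) (g x)) s := by rw [e1, e2]
        _ ≤ DD star (sconv star k f) (sconv star k g) s := le_trans h2 h3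
        _ ≤ DD star (sconv star k f) (sconv star k g) t' + ε := by linarith
    exact key t

end P4

section P5
variable {G : Type} [Group G] {D : G → G → ℝ → ℝ} {star : (ℝ → ℝ) → (ℝ → ℝ) → (ℝ → ℝ)}

lemma part5 (hD : IsPIMG D star) (hc : StarCont star) (hsc : SupCont star)
    (F : ℕ → G → ℝ → ℝ) (hF : ∀ n, InPi D star (F n))
    (hCau : ∀ t > (0:ℝ), ∀ ε > (0:ℝ), ∃ N, ∀ n ≥ N, ∀ m ≥ N,
      1 - ε ≤ DD star (F n) (F m) t) :
    ∃ f, InPi D star f ∧ WConv (fun n => DD star (F n) f) H0 := by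
  haveI : Nonempty G := ⟨1⟩
  have htri := hD.tri
  have hFm : ∀ n x, MemDP (F n x) := fun n => (hF n).1.1
  have hFl : ∀ n, Lip1 D star (F n) := fun n => (hF n).1
  have hdm : ∀ w : G, ∀ x, MemDP (dlt D w x) := fun w x => hD.mem x w
  choose aa hca hwa using fun n => (hF n).2
  have hbex : ∀ n : ℕ, ∃ mm, 1 - 1/(n+1:ℝ) ≤ F n (aa n mm) (1/(n+1:ℝ)) := by
    intro n
    obtain ⟨N, hN⟩ := lemmaF hD (hca n) (hFm n) (hwa n)
      (show (0:ℝ) < 1/(n+1:ℝ) by positivity) (show (0:ℝ) < 1/(n+1:ℝ) by positivity)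
    exact ⟨N, hN N le_rfl⟩
  choose mm hmm using hbex
  set b : ℕ → G := fun n => aa n (mm n) with hbdef
  have hDb : ∀ n : ℕ, ∀ η δ : ℝ, 1/(n+1:ℝ) ≤ η → 1/(n+1:ℝ) ≤ δ →
      1 - δ ≤ DD star (F n) (dlt D (b n)) η := by
    intro n η δ h1 h2
    have h3 : star (F n (b n)) (dlt D (b n) (b n)) η ≤ DD star (F n) (dlt D (b n)) η :=
      le_DD htri (hFm n) (hdm (b n)) (b n) η
    have e : dlt D (b n) (b n) = H0 := (hD.eq_iff (b n) (b n)).mpr rfl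
    rw [e, star_H0_right htri (hFm n (b n))] at h3
    have h4 : F n (b n) (1/(n+1:ℝ)) ≤ F n (b n) η := (hFm n (b n)).mono' h1
    have h5 := hmm n
    linarith
  have hsharpF : ∀ n y z, dpLE (star (F n y) (F n z)) (D y z) :=
    fun n => pisharp hD hc (hFm n) (hwa n)
  have hsharpd : ∀ w y z : G, dpLE (star (dlt D w y) (dlt D w z)) (D y z) := by
    intro w y z s
    have h1 := hD.triangle_ineq y w z s
    show star (D y w) (D z w) s ≤ D y z s
    rw [hD.symm z w]
    exact h1
  have hlipd : ∀ w x z : G, dpLE (star (D x z) (dlt D w z)) (dlt D w x) :=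
    fun w x z => hD.triangle_ineq x z w
  -- b is a Cauchy sequence
  have hcb : PCauchy D b := by
    intro t ht ε hε
    obtain ⟨δ1, hδ1, η1, hη1, hq1⟩ := quant htri hc (show (0:ℝ) < t/2 by linarith)
      (show t/2 < t by linarith) (show (0:ℝ) < ε/3 by linarith)
    obtain ⟨δ2, hδ2, η2, hη2, hq2⟩ := quant htri hc (show (0:ℝ) < t/4 by linarith)
      (show t/4 < t/2 by linarith) (show (0:ℝ) < ε/3 by linarith)
    obtain ⟨N3, hN3⟩ := hCau (t/4) (by linarith) (ε/3) (by linarith)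
    obtain ⟨N4, hN4⟩ := one_div_succ_le (show (0:ℝ) < min η1 δ1 from lt_min hη1 hδ1)
    obtain ⟨N5, hN5⟩ := one_div_succ_le (show (0:ℝ) < min η2 δ2 from lt_min hη2 hδ2)
    refine ⟨max (max N3 N4) N5, fun n hn p hp => ?_⟩
    have hnN3 : N3 ≤ n := le_trans (le_max_left _ _) (le_trans (le_max_left _ _) hn)
    have hnN4 : N4 ≤ n := le_trans (le_max_right _ _) (le_trans (le_max_left _ _) hn)
    have hpN3 : N3 ≤ p := le_trans (le_max_left _ _) (le_trans (le_max_left _ _) hp)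
    have hpN5 : N5 ≤ p := le_trans (le_max_right _ _) hp
    have hDDa : 1 - δ1 ≤ DD star (dlt D (b n)) (F n) η1 := by
      rw [← DD_comm htri (hFm n) (hdm (b n))]
      exact hDb n η1 δ1 (le_trans (hN4 n hnN4) (min_le_left _ _))
        (le_trans (hN4 n hnN4) (min_le_right _ _))
    have t1 : DD star (F n) (dlt D (b p)) (t/2) - ε/3 ≤
        star (DD star (dlt D (b n)) (F n)) (DD star (F n) (dlt D (b p))) t :=
      hq1 _ _ (DD_memDP htri (hdm (b n)) (hFm n)) (DD_memDP htri (hFm n) (hdm (b p))) hDDa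
    have t2 := DDtri hD hsc (hdm (b n)) (hFm n) (hdm (b p)) (hsharpF n) (hlipd (b p)) t
    have t3 : DD star (dlt D (b n)) (dlt D (b p)) t ≤ D (b n) (b p) t := by
      apply ciSup_le
      intro x
      have h1 := hD.triangle_ineq (b n) x (b p) t
      show star (D x (b n)) (D x (b p)) t ≤ _
      rw [hD.symm x (b n)]
      exact h1
    -- inner step
    have hDDb : 1 - δ2 ≤ DD star (F p) (dlt D (b p)) η2 :=
      hDb p η2 δ2 (le_trans (hN5 p hpN5) (min_le_left _ _))
        (le_trans (hN5 p hpN5) (min_le_right _ _))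
    have t4 : DD star (F n) (F p) (t/4) - ε/3 ≤
        star (DD star (F n) (F p)) (DD star (F p) (dlt D (b p))) (t/2) := by
      have h := hq2 _ _ (DD_memDP htri (hFm p) (hdm (b p))) (DD_memDP htri (hFm n) (hFm p)) hDDb
      rwa [htri.comm _ _ (DD_memDP htri (hFm p) (hdm (b p))) (DD_memDP htri (hFm n) (hFm p))] at h
    have t5 := DDtri hD hsc (hFm n) (hFm p) (hdm (b p)) (hsharpF p) (hlipd (b p)) (t/2)
    have t6 := hN3 n hnN3 p hpN3
    linarith [t2, t5]
  refine ⟨flim D b, inPi_flim hD hc hcb, ?_⟩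
  have hflm : ∀ x, MemDP (flim D b x) := fun x => flim_memDP hD b x
  have hlipf : ∀ x z, dpLE (star (D x z) (flim D b z)) (flim D b x) :=
    (lip1_flim hD hc hcb).2
  intro t _
  rcases le_or_gt t 0 with ht | ht
  · have hz : ∀ n, DD star (F n) (flim D b) t = 0 :=
      fun n => (DD_memDP htri (hFm n) hflm).zero t ht
    simp only [hz, H0, if_neg (not_lt.mpr ht)]
    exact tendsto_const_nhds
  · rw [show H0 t = 1 from if_pos ht, Metric.tendsto_atTop]
    intro ε' hε'
    obtain ⟨δ1, hδ1, η1, hη1, hq1⟩ := quant htri hc (show (0:ℝ) < t/2 by linarith)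
      (show t/2 < t by linarith) (show (0:ℝ) < ε'/4 by linarith)
    obtain ⟨N1, hN1⟩ := lemmaF hD hcb hflm (wconv_flim hD hc hcb)
      (show (0:ℝ) < t/2 by linarith) (show (0:ℝ) < ε'/4 by linarith)
    obtain ⟨N2, hN2⟩ := one_div_succ_le (show (0:ℝ) < min η1 δ1 from lt_min hη1 hδ1)
    refine ⟨max N1 N2, fun n hn => ?_⟩
    have hnN1 : N1 ≤ n := le_trans (le_max_left _ _) hn
    have hnN2 : N2 ≤ n := le_trans (le_max_right _ _) hn
    have hDDa : 1 - δ1 ≤ DD star (F n) (dlt D (b n)) η1 :=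
      hDb n η1 δ1 (le_trans (hN2 n hnN2) (min_le_left _ _))
        (le_trans (hN2 n hnN2) (min_le_right _ _))
    have t1 : DD star (dlt D (b n)) (flim D b) (t/2) - ε'/4 ≤
        star (DD star (F n) (dlt D (b n))) (DD star (dlt D (b n)) (flim D b)) t :=
      hq1 _ _ (DD_memDP htri (hFm n) (hdm (b n))) (DD_memDP htri (hdm (b n)) hflm) hDDa
    have t2 := DDtri hD hsc (hFm n) (hdm (b n)) hflm (hsharpd (b n)) hlipf t
    have t3 : flim D b (b n) (t/2) ≤ DD star (dlt D (b n)) (flim D b) (t/2) := by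
      have h := le_DD htri (hdm (b n)) hflm (b n) (t/2)
      have e : dlt D (b n) (b n) = H0 := (hD.eq_iff (b n) (b n)).mpr rfl
      rwa [e, star_H0_left htri (hflm (b n))] at h
    have t4 : 1 - ε'/4 ≤ flim D b (b n) (t/2) := hN1 n hnN1
    have t5 : DD star (F n) (flim D b) t ≤ 1 := (DD_memDP htri (hFm n) hflm).le_one t
    rw [Real.dist_eq, abs_lt]
    constructor <;> linarith [t2]

end P5

/-- (Π(G), ⊙, 𝔻, ⋆) is a probabilistic invariant complete metric
group with identity δ_e. -/
theorem stmt15 {G : Type} [Group G] (D : G → G → ℝ → ℝ)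
    (star : (ℝ → ℝ) → (ℝ → ℝ) → (ℝ → ℝ)) (h : IsPIMG D star)
    (hc : StarCont star) (hsc : SupCont star) :
    (∀ f g, InPi D star f → InPi D star g → InPi D star (sconv star f g)) ∧
    (∀ f, InPi D star f →
      sconv star f (dlt D 1) = f ∧ sconv star (dlt D 1) f = f) ∧
    (∀ f, InPi D star f → ∃ g, InPi D star g ∧
      sconv star f g = dlt D 1 ∧ sconv star g f = dlt D 1) ∧
    (∀ f g k, InPi D star f → InPi D star g → InPi D star k →
      DD star (sconv star f k) (sconv star g k) = DD star f g ∧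
      DD star (sconv star k f) (sconv star k g) = DD star f g) ∧
    (∀ F : ℕ → G → ℝ → ℝ, (∀ n, InPi D star (F n)) →
      (∀ t > (0:ℝ), ∀ ε > (0:ℝ), ∃ N, ∀ n ≥ N, ∀ m ≥ N,
        1 - ε ≤ DD star (F n) (F m) t) →
      ∃ f, InPi D star f ∧ WConv (fun n => DD star (F n) f) H0) := by
  refine ⟨fun f g hf hg => part1 h hc hf hg,
          fun f hf => part2 h hc hf,
          fun f hf => part3 h hc hf,
          fun f g k hf hg hk => ?_,
          fun F hF hCau => part5 h hc hsc F hF hCau⟩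
  obtain ⟨hlk, c, hck, hwk⟩ := hk
  exact ⟨part4a h hc hsc hf.1 hg.1 hlk hck hwk, part4b h hc hsc hf.1 hg.1 hlk hck hwk⟩
end

section
/- For any left-continuous t-norm T, the distribution H_0 is the only invertible element of the monoid (Δ⁺, ⋆_T): if L ⋆_T K = H_0 for L, K ∈ Δ⁺, then L = K = H_0. -/
open Filter Topology Set

/-- H₀ is the only invertible element of (Δ⁺, ⋆_T). -/
theorem stmt17 (T : ℝ → ℝ → ℝ) (hT : IsTnorm T) (hlc : LeftCtsTnorm T)
    (L K : ℝ → ℝ) (hL : MemDP L) (hK : MemDP K)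
    (hinv : starT T L K = H0) : L = H0 ∧ K = H0 := by
  obtain ⟨hLmono, hL0, hL1, _, hLneg⟩ := hL
  obtain ⟨hKmono, hK0, hK1, _, hKneg⟩ := hK
  have key : ∀ t, 0 < t → L t = 1 ∧ K t = 1 := by
    intro t ht
    have h1 : (⨆ s : ℝ, T (L s) (K (t - s))) = 1 := by
      have := congrFun hinv t
      simpa [starT, H0, ht] using this
    have hle : ∀ ε : ℝ, 0 < ε → ε < 1 → 1 - ε ≤ L t ∧ 1 - ε ≤ K t := by
      intro ε hε hε1
      have hbdd : BddAbove (Set.range fun s => T (L s) (K (t - s))) := by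
        refine ⟨1, ?_⟩
        rintro _ ⟨s, rfl⟩
        exact (hT.mem _ ⟨hL0 s, hL1 s⟩ _ ⟨hK0 _, hK1 _⟩).2
      have hlt : (1:ℝ) - ε < ⨆ s : ℝ, T (L s) (K (t - s)) := by
        rw [h1]; linarith
      obtain ⟨s, hs⟩ := (lt_ciSup_iff hbdd).mp hlt
      have hTle1 : T (L s) (K (t - s)) ≤ L s := by
        calc T (L s) (K (t - s)) ≤ T (L s) 1 := hT.mono _ _ _ (hK1 _)
          _ = L s := hT.one _ ⟨hL0 s, hL1 s⟩
      have hTle2 : T (L s) (K (t - s)) ≤ K (t - s) := by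
        rw [hT.comm]
        calc T (K (t - s)) (L s) ≤ T (K (t - s)) 1 := hT.mono _ _ _ (hL1 _)
          _ = K (t - s) := hT.one _ ⟨hK0 _, hK1 _⟩
      have hLs : 1 - ε < L s := lt_of_lt_of_le hs hTle1
      have hKs : 1 - ε < K (t - s) := lt_of_lt_of_le hs hTle2
      have hspos : 0 < s := by
        by_contra h
        push_neg at h
        have := hLneg _ h
        linarith
      have hts : 0 < t - s := by
        by_contra h
        push_neg at h
        have := hKneg _ h
        linarith
      constructor
      · have : L s ≤ L t := hLmono (by linarith)
        linarith
      · have : K (t - s) ≤ K t := hKmono (by linarith)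
        linarith
    constructor
    · refine le_antisymm (hL1 t) ?_
      by_contra h
      push_neg at h
      have h0 : 0 ≤ L t := hL0 t
      have := (hle ((1 - L t) / 2) (by linarith) (by linarith)).1
      linarith
    · refine le_antisymm (hK1 t) ?_
      by_contra h
      push_neg at h
      have h0 : 0 ≤ K t := hK0 t
      have := (hle ((1 - K t) / 2) (by linarith) (by linarith)).2
      linarith
  constructor <;> (funext t; rcases lt_or_ge 0 t with h | h)
  · simpa [H0, h] using (key t h).1
  · simpa [H0, not_lt.mpr h] using hLneg t h
  · simpa [H0, h] using (key t h).2
  · simpa [H0, not_lt.mpr h] using hKneg t h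
end
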